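/- For a natural number n, the element θ^n is a constant, i.e., D(θ^n) = 0, if and only if (p^k − 1) divides n·(p^j − 1). -/

import Mathlib

/-- The number derivative on a finite field determined by a generator `θ`
and exponent `s`: `D a = (a^s - a) / (θ^s - θ)`. -/
def numDeriv {F : Type*} [Field F] (θ : F) (s : ℕ) (a : F) : F :=
  (a ^ s - a) / (θ ^ s - θ)

/-- `θ^n` is a constant iff `(p^k - 1) ∣ n·(p^j - 1)`. -/
theorem numDeriv_pow_eq_zero_iff {F : Type*} [Field F] [Fintype F]
    (p k j : ℕ) (hp : p.Prime) (hk : 0 < k) (hj : 0 < j) (hkj : ¬ k ∣ j)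
    (hcard : Fintype.card F = p ^ k)
    (θ : F) (hθ : ∀ a : F, a ≠ 0 → ∃ m : ℕ, θ ^ m = a)
    (hs : θ ^ p ^ j ≠ θ)
    (n : ℕ) :
    numDeriv θ (p ^ j) (θ ^ n) = 0 ↔ (p ^ k - 1) ∣ n * (p ^ j - 1) := by
  have hs0 : 0 < p ^ j := pow_pos hp.pos j
  have hθ0 : θ ≠ 0 := by
    intro h
    apply hs
    rw [h, zero_pow hs0.ne']
  have hden : θ ^ p ^ j - θ ≠ 0 := sub_ne_zero.mpr hs
  set u : Fˣ := Units.mk0 θ hθ0 with hu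
  have hord : orderOf θ = p ^ k - 1 := by
    have hmem : ∀ v : Fˣ, v ∈ Subgroup.zpowers u := by
      intro v
      obtain ⟨m, hm⟩ := hθ (v : F) v.ne_zero
      refine ⟨(m : ℤ), ?_⟩
      show u ^ (m : ℤ) = v
      rw [zpow_natCast]
      exact Units.ext (by simpa [hu] using hm)
    have h1 : orderOf u = Nat.card Fˣ := orderOf_eq_card_of_forall_mem_zpowers hmem
    have h2 : orderOf θ = orderOf u := by
      rw [← orderOf_units (y := u)]; rfl
    rw [h2, h1, Nat.card_units, Nat.card_eq_fintype_card, hcard]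
  rw [numDeriv, div_eq_zero_iff]
  simp only [hden, or_false]
  rw [sub_eq_zero, ← pow_mul]
  have key : n * p ^ j = n * (p ^ j - 1) + n := by
    obtain ⟨t, ht⟩ := Nat.exists_eq_succ_of_ne_zero hs0.ne'
    rw [ht, Nat.succ_sub_one, Nat.mul_succ]
  rw [key, pow_add, ← hord]
  constructor
  · intro h
    have h1 : θ ^ (n * (p ^ j - 1)) = 1 := by
      have hn : θ ^ n ≠ 0 := pow_ne_zero _ hθ0
      exact mul_right_cancel₀ hn (by rw [h, one_mul])
    exact orderOf_dvd_of_pow_eq_one h1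
  · intro h
    rw [orderOf_dvd_iff_pow_eq_one.mp h, one_mul]
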